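/- On U = {(x,y) ∈ ℝ² : x > y}, the vector fields X₁ = (1,1), X₂ = (x,y), X₃ = (x²,y²) (the class I₄, sl(2) of type II) are Hamiltonian with respect to the symplectic form ω = (x−y)^{−2} dx∧dy with Hamiltonian functions h₁ = 1/(x−y), h₂ = (x+y)/(2(x−y)), h₃ = xy/(x−y), respectively (i.e. ∂h_i/∂x = −(x−y)^{−2}·X_i² and ∂h_i/∂y = (x−y)^{−2}·X_i¹). Moreover, under the Poisson bracket {g,h}_ω = (x−y)²(∂g/∂x·∂h/∂y − ∂g/∂y·∂h/∂x) these satisfy {h₁,h₂}_ω = −h₁, {h₁,h₃}_ω = −2h₂, {h₂,h₃}_ω = −h₃, so ⟨h₁,h₂,h₃⟩ is a Lie algebra isomorphic to sl(2). -/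
import Mathlib

namespace Stmt9

/-- Partial derivative in the x-direction. -/
noncomputable def pdx (f : ℝ × ℝ → ℝ) (p : ℝ × ℝ) : ℝ := fderiv ℝ f p (1, 0)

/-- Partial derivative in the y-direction. -/
noncomputable def pdy (f : ℝ × ℝ → ℝ) (p : ℝ × ℝ) : ℝ := fderiv ℝ f p (0, 1)

/-- Poisson bracket induced by ω = (x−y)⁻² dx∧dy. -/
noncomputable def pbw (g h : ℝ × ℝ → ℝ) (p : ℝ × ℝ) : ℝ :=
  (p.1 - p.2) ^ 2 * (pdx g p * pdy h p - pdy g p * pdx h p)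

/-- Domain: {x > y}. -/
def U : Set (ℝ × ℝ) := {p | p.1 > p.2}

/-- Basis of the class I₄, sl(2) of type II. -/
def X1 : ℝ × ℝ → ℝ × ℝ := fun _ => (1, 1)
def X2 : ℝ × ℝ → ℝ × ℝ := fun p => (p.1, p.2)
def X3 : ℝ × ℝ → ℝ × ℝ := fun p => (p.1 ^ 2, p.2 ^ 2)

noncomputable def h1 : ℝ × ℝ → ℝ := fun p => 1 / (p.1 - p.2)
noncomputable def h2 : ℝ × ℝ → ℝ := fun p => (p.1 + p.2) / (2 * (p.1 - p.2))
noncomputable def h3 : ℝ × ℝ → ℝ := fun p => p.1 * p.2 / (p.1 - p.2)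

open ContinuousLinearMap in
/-- On {x > y}, the fields X₁, X₂, X₃ of I₄ (sl(2) of type II) are Hamiltonian with
respect to ω = (x−y)⁻² dx∧dy with Hamiltonian functions h₁, h₂, h₃, which close sl(2)
under the induced Poisson bracket. -/
theorem stmt_9 : ∀ p ∈ U,
    (pdx h1 p = -(((p.1 - p.2) ^ 2)⁻¹ * (X1 p).2) ∧
      pdy h1 p = ((p.1 - p.2) ^ 2)⁻¹ * (X1 p).1) ∧
    (pdx h2 p = -(((p.1 - p.2) ^ 2)⁻¹ * (X2 p).2) ∧
      pdy h2 p = ((p.1 - p.2) ^ 2)⁻¹ * (X2 p).1) ∧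
    (pdx h3 p = -(((p.1 - p.2) ^ 2)⁻¹ * (X3 p).2) ∧
      pdy h3 p = ((p.1 - p.2) ^ 2)⁻¹ * (X3 p).1) ∧
    pbw h1 h2 p = -h1 p ∧ pbw h1 h3 p = -2 * h2 p ∧ pbw h2 h3 p = -h3 p := by
  intro p hp
  have hs : p.1 - p.2 ≠ 0 := sub_ne_zero.mpr (ne_of_gt hp)
  have hs2 : (2 : ℝ) * (p.1 - p.2) ≠ 0 := mul_ne_zero two_ne_zero hs
  set D : ℝ × ℝ →L[ℝ] ℝ := ContinuousLinearMap.fst ℝ ℝ ℝ - ContinuousLinearMap.snd ℝ ℝ ℝ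
    with hD
  have d1 : HasFDerivAt (fun q : ℝ × ℝ => q.1 - q.2) D p :=
    hasFDerivAt_fst.sub hasFDerivAt_snd
  have H1 : HasFDerivAt h1
      ((smulRight (1 : ℝ →L[ℝ] ℝ) (-((p.1 - p.2) ^ 2)⁻¹)).comp D) p := by
    unfold h1; simp only [one_div]; exact (hasFDerivAt_inv hs).comp p d1
  have H2 : HasFDerivAt h2
      ((p.1 + p.2) • ((smulRight (1 : ℝ →L[ℝ] ℝ) (-((2 * (p.1 - p.2)) ^ 2)⁻¹)).comp
        ((2 : ℝ) • D)) + (2 * (p.1 - p.2))⁻¹ • (ContinuousLinearMap.fst ℝ ℝ ℝ +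
          ContinuousLinearMap.snd ℝ ℝ ℝ)) p := by
    unfold h2; simp only [div_eq_mul_inv]
    exact (hasFDerivAt_fst.add hasFDerivAt_snd).mul
      ((hasFDerivAt_inv hs2).comp p (d1.const_mul 2))
  have H3 : HasFDerivAt h3
      ((p.1 * p.2) • ((smulRight (1 : ℝ →L[ℝ] ℝ) (-((p.1 - p.2) ^ 2)⁻¹)).comp D) +
        (p.1 - p.2)⁻¹ • (p.1 • ContinuousLinearMap.snd ℝ ℝ ℝ +
          p.2 • ContinuousLinearMap.fst ℝ ℝ ℝ)) p := by
    unfold h3; simp only [div_eq_mul_inv]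
    exact (hasFDerivAt_fst.mul hasFDerivAt_snd).mul ((hasFDerivAt_inv hs).comp p d1)
  have e1x : pdx h1 p = -((p.1 - p.2) ^ 2)⁻¹ := by
    rw [pdx, H1.fderiv]; simp [hD]
  have e1y : pdy h1 p = ((p.1 - p.2) ^ 2)⁻¹ := by
    rw [pdy, H1.fderiv]; simp [hD]
  have e2x : pdx h2 p = -(((p.1 - p.2) ^ 2)⁻¹ * p.2) := by
    rw [pdx, H2.fderiv]; simp [hD]; field_simp; ring
  have e2y : pdy h2 p = ((p.1 - p.2) ^ 2)⁻¹ * p.1 := by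
    rw [pdy, H2.fderiv]; simp [hD]; field_simp; ring
  have e3x : pdx h3 p = -(((p.1 - p.2) ^ 2)⁻¹ * p.2 ^ 2) := by
    rw [pdx, H3.fderiv]; simp [hD]; field_simp; ring
  have e3y : pdy h3 p = ((p.1 - p.2) ^ 2)⁻¹ * p.1 ^ 2 := by
    rw [pdy, H3.fderiv]; simp [hD]; field_simp; ring
  refine ⟨⟨by simpa [X1] using e1x, by simpa [X1] using e1y⟩,
    ⟨by simpa [X2] using e2x, by simpa [X2] using e2y⟩,
    ⟨by simpa [X3] using e3x, by simpa [X3] using e3y⟩, ?_, ?_, ?_⟩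
  · rw [pbw, e1x, e1y, e2x, e2y]; unfold h1; field_simp; ring
  · rw [pbw, e1x, e1y, e3x, e3y]; unfold h2; field_simp; ring
  · rw [pbw, e2x, e2y, e3x, e3y]; unfold h3; field_simp; ring

end Stmt9
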